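/- For m ≥ 0 and the alternating iteration scheme, Q_m^L(q) = Σ_{j≥1} (−1)^{j−1} q^{j(3j−1)/2 + mj} · qbinom(2L−m, L + ⌊3j/2⌋). -/

import Mathlib

namespace Dyson

/-- The rank of a partition: largest part minus number of parts. -/
def rank {n : ℕ} (π : n.Partition) : ℤ :=
  (π.parts.sup : ℤ) - π.parts.card

/-- The Euler product `(q;q)_∞`. -/
noncomputable def euler (q : ℝ) : ℝ := ∏' j : ℕ, (1 - q ^ (j + 1))

/-- `Q_m(q)`: generating function for nonempty partitions of rank ≥ m. -/
noncomputable def Q (q : ℝ) (m : ℤ) : ℝ :=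
  ∑' n : ℕ, (Nat.card {π : (n + 1).Partition // m ≤ rank π} : ℝ) * q ^ (n + 1)

noncomputable def qPoch (q : ℝ) (n : ℕ) : ℝ := ∏ j ∈ Finset.range n, (1 - q ^ (j + 1))

noncomputable def qbinom (q : ℝ) (a b : ℤ) : ℝ :=
  if 0 ≤ b ∧ b ≤ a then qPoch q a.toNat / (qPoch q b.toNat * qPoch q (a - b).toNat) else 0

noncomputable def QL (q : ℝ) (m L : ℤ) : ℝ :=
  ∑' n : ℕ,
    (Nat.card {π : (n + 1).Partition // m ≤ rank π ∧ (π.parts.sup : ℤ) ≤ L} : ℝ) * q ^ (n + 1)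

def partAt {n : ℕ} (π : n.Partition) (j : ℕ) : ℕ :=
  ((π.parts.sort (· ≤ ·)).reverse.getD j 0)

def inRankSet {n : ℕ} (π : n.Partition) (k : ℤ) : Prop :=
  ∃ j : ℕ, (j : ℤ) - partAt π (j + 1) = k

noncomputable def G (q : ℝ) (k : ℤ) : ℝ :=
  ∑' n : ℕ, (Nat.card {π : n.Partition // inRankSet π k} : ℝ) * q ^ n

def crank {n : ℕ} (π : n.Partition) : ℤ :=
  if π.parts.count 1 = 0 then (π.parts.sup : ℤ)
  else ((π.parts.filter (fun p => π.parts.count 1 < p)).card : ℤ) - π.parts.count 1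


noncomputable def qb (q : ℝ) (n k : ℕ) : ℝ :=
  if k ≤ n then qPoch q n / (qPoch q k * qPoch q (n - k)) else 0

lemma one_sub_pow_ne {q : ℝ} (hq : |q| < 1) (j : ℕ) : (1 : ℝ) - q ^ (j + 1) ≠ 0 := by
  have h1 : |q ^ (j + 1)| < 1 := by
    rw [abs_pow]; exact pow_lt_one₀ (abs_nonneg q) hq (Nat.succ_ne_zero j)
  intro h
  have h2 : q ^ (j + 1) = 1 := by linarith
  rw [h2] at h1; norm_num at h1

lemma qPoch_ne_zero {q : ℝ} (hq : |q| < 1) (n : ℕ) : qPoch q n ≠ 0 := by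
  unfold qPoch
  exact Finset.prod_ne_zero_iff.2 fun j _ => one_sub_pow_ne hq j

lemma qPoch_succ (q : ℝ) (n : ℕ) : qPoch q (n + 1) = qPoch q n * (1 - q ^ (n + 1)) := by
  unfold qPoch; rw [Finset.prod_range_succ]

lemma qPoch_zero (q : ℝ) : qPoch q 0 = 1 := by simp [qPoch]

lemma qb_zero_right {q : ℝ} (hq : |q| < 1) (n : ℕ) : qb q n 0 = 1 := by
  simp [qb, qPoch_zero, div_self (qPoch_ne_zero hq n)]

lemma qb_self {q : ℝ} (hq : |q| < 1) (n : ℕ) : qb q n n = 1 := by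
  simp [qb, qPoch_zero, div_self (qPoch_ne_zero hq n)]

lemma qb_eq_zero {q : ℝ} {n k : ℕ} (h : n < k) : qb q n k = 0 := by
  simp [qb, Nat.not_le.2 h]

lemma qb_ratio {q : ℝ} {n k : ℕ} (h : k ≤ n) :
    qb q n k = qPoch q n / (qPoch q k * qPoch q (n - k)) := by
  rw [qb, if_pos h]

/-- Pascal rule 1: `[n+1, b+1] = [n, b] + q^(b+1) [n, b+1]`. -/
lemma pascal1 {q : ℝ} (hq : |q| < 1) (n b : ℕ) :
    qb q (n + 1) (b + 1) = qb q n b + q ^ (b + 1) * qb q n (b + 1) := by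
  rcases lt_or_ge n (b + 1) with h | h
  · rcases Nat.lt_or_ge n b with h2 | h2
    · rw [qb_eq_zero (show n < b + 1 by omega), qb_eq_zero (show n < b by omega), qb_eq_zero (show n + 1 < b + 1 by omega)]; ring
    · have hnb : n = b := by omega
      subst hnb
      rw [qb_self hq, qb_self hq, qb_eq_zero (by omega)]; ring
  · obtain ⟨r, rfl⟩ : ∃ r, n = b + 1 + r := ⟨n - (b+1), by omega⟩
    rw [qb_ratio (by omega), qb_ratio (by omega), qb_ratio (by omega)]
    have d1 : b + 1 + r + 1 - (b + 1) = r + 1 := by omega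
    have d2 : b + 1 + r - b = r + 1 := by omega
    have d3 : b + 1 + r - (b + 1) = r := by omega
    rw [d1, d2, d3, qPoch_succ q (b + 1 + r), qPoch_succ q b, qPoch_succ q r]
    have hb := qPoch_ne_zero hq b
    have hr := qPoch_ne_zero hq r
    have h1b := one_sub_pow_ne hq b
    have h1r := one_sub_pow_ne hq r
    have hbr := qPoch_ne_zero hq (b + 1 + r)
    have h1br := one_sub_pow_ne hq (b + 1 + r)
    field_simp
    ring

/-- Pascal rule 2: `[n+1, b+1] = [n, b+1] + q^(n-b) [n, b]`. -/
lemma pascal2 {q : ℝ} (hq : |q| < 1) (n b : ℕ) :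
    qb q (n + 1) (b + 1) = qb q n (b + 1) + q ^ (n - b) * qb q n b := by
  rcases lt_or_ge n (b + 1) with h | h
  · rcases Nat.lt_or_ge n b with h2 | h2
    · rw [qb_eq_zero (show n < b by omega), qb_eq_zero (show n < b + 1 by omega),
        qb_eq_zero (show n + 1 < b + 1 by omega)]; ring
    · have hnb : n = b := by omega
      subst hnb
      rw [qb_self hq, qb_self hq, qb_eq_zero (by omega)]
      simp
  · obtain ⟨r, rfl⟩ : ∃ r, n = b + 1 + r := ⟨n - (b+1), by omega⟩
    rw [qb_ratio (by omega), qb_ratio (by omega), qb_ratio (by omega)]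
    have d1 : b + 1 + r + 1 - (b + 1) = r + 1 := by omega
    have d2 : b + 1 + r - b = r + 1 := by omega
    have d3 : b + 1 + r - (b + 1) = r := by omega
    have d4 : b + 1 + r - b = r + 1 := by omega
    rw [d1, d2, d3, qPoch_succ q (b + 1 + r), qPoch_succ q b, qPoch_succ q r]
    have hb := qPoch_ne_zero hq b
    have hr := qPoch_ne_zero hq r
    have h1b := one_sub_pow_ne hq b
    have h1r := one_sub_pow_ne hq r
    have hbr := qPoch_ne_zero hq (b + 1 + r)
    have h1br := one_sub_pow_ne hq (b + 1 + r)
    have hpow : q ^ (r + 1) * q ^ (b + 1) = q ^ (b + 1 + r + 1) := by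
      rw [← pow_add]; ring_nf
    field_simp
    ring_nf


/-- helper: split a Nat.card of a subtype along a disjunction -/
lemma card_or {α : Type*} [Finite α] (p q : α → Prop) (h : ∀ x, ¬(p x ∧ q x)) :
    Nat.card {x // p x ∨ q x} = Nat.card {x // p x} + Nat.card {x // q x} := by
  classical
  rw [← Nat.card_sum]
  refine Nat.card_congr (subtypeOrEquiv p q ?_)
  intro s hp hq x hx
  exact absurd ⟨hp x hx, hq x hx⟩ (h x)

/-- The workhorse: removing one copy of the part `l`. -/
def eraseEquiv (N l c : ℕ) (hl : 0 < l) (hln : l ≤ N) :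
    {π : N.Partition // l ∈ π.parts ∧ π.parts.card ≤ c + 1 ∧ π.parts.sup ≤ l} ≃
    {μ : (N - l).Partition // μ.parts.card ≤ c ∧ μ.parts.sup ≤ l} where
  toFun π := ⟨⟨π.1.parts.erase l,
      fun hi => π.1.parts_pos (Multiset.mem_of_mem_erase hi),
      by
        have h := Multiset.cons_erase π.2.1
        have hs : π.1.parts.sum = N := π.1.parts_sum
        have h2 : l + (π.1.parts.erase l).sum = N := by
          rw [← Multiset.sum_cons, h, hs]
        omega⟩,
    by
      constructor
      · have h1 := Multiset.card_erase_of_mem π.2.1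
        have h2 := π.2.2.1
        have h3 : 0 < Multiset.card π.1.parts := Multiset.card_pos_iff_exists_mem.2 ⟨_, π.2.1⟩
        simp only [h1, Nat.pred_eq_sub_one]
        omega
      · exact le_trans (Multiset.sup_le.2 fun x hx =>
          Multiset.le_sup (Multiset.mem_of_mem_erase hx)) π.2.2.2⟩
  invFun μ := ⟨⟨l ::ₘ μ.1.parts,
      by
        intro i hi
        rcases Multiset.mem_cons.1 hi with rfl | hi
        · exact hl
        · exact μ.1.parts_pos hi,
      by rw [Multiset.sum_cons, μ.1.parts_sum]; omega⟩,
    by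
      refine ⟨Multiset.mem_cons_self _ _, ?_, ?_⟩
      · rw [Multiset.card_cons]
        exact Nat.add_le_add_right μ.2.1 1
      · rw [Multiset.sup_cons]
        exact sup_le le_rfl μ.2.2⟩
  left_inv π := by
    apply Subtype.ext
    apply Nat.Partition.ext
    exact Multiset.cons_erase π.2.1
  right_inv μ := by
    apply Subtype.ext
    apply Nat.Partition.ext
    exact Multiset.erase_cons_head _ _

lemma isEmpty_mem_part {N l : ℕ} (h : N < l) (P : N.Partition → Prop) :
    IsEmpty {π : N.Partition // l ∈ π.parts ∧ P π} := by
  constructor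
  rintro ⟨π, hmem, -⟩
  have : l ≤ π.parts.sum := Multiset.single_le_sum (fun x _ => Nat.zero_le x) _ hmem
  rw [π.parts_sum] at this
  omega

noncomputable def boxCount (a b n : ℕ) : ℕ :=
  Nat.card {π : n.Partition // π.parts.card ≤ a ∧ π.parts.sup ≤ b}

noncomputable def rkCount (m l n : ℕ) : ℕ :=
  Nat.card {π : n.Partition // (m : ℤ) ≤ rank π ∧ π.parts.sup ≤ l}


lemma parts_eq_zero {n : ℕ} (π : n.Partition) (h : n = 0) : π.parts = 0 := by
  rw [Multiset.eq_zero_iff_forall_notMem]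
  intro x hx
  have h1 := π.parts_pos hx
  have h2 : x ≤ π.parts.sum := Multiset.single_le_sum (fun y _ => Nat.zero_le y) _ hx
  rw [π.parts_sum, h] at h2
  omega

lemma boxCount_zero (a b : ℕ) : boxCount a b 0 = 1 := by
  unfold boxCount
  have h : ∀ π : (0 : ℕ).Partition, Multiset.card π.parts ≤ a ∧ π.parts.sup ≤ b := by
    intro π
    rw [parts_eq_zero π rfl]
    simp
  rw [Nat.card_congr (Equiv.subtypeUnivEquiv h)]
  have : Subsingleton ((0 : ℕ).Partition) := by
    constructor
    intro x y
    apply Nat.Partition.ext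
    rw [parts_eq_zero x rfl, parts_eq_zero y rfl]
  rw [Nat.card_eq_one_iff_unique]
  exact ⟨this, ⟨⟨0, by simp, by simp⟩⟩⟩

lemma boxCount_large {a b n : ℕ} (h : a * b < n) : boxCount a b n = 0 := by
  unfold boxCount
  rw [Nat.card_eq_zero]
  left
  constructor
  rintro ⟨π, hc, hs⟩
  have h1 : π.parts.sum ≤ Multiset.card π.parts • b :=
    Multiset.sum_le_card_nsmul _ _ fun x hx => le_trans (Multiset.le_sup hx) hs
  rw [π.parts_sum, smul_eq_mul] at h1
  have : Multiset.card π.parts * b ≤ a * b := Nat.mul_le_mul_right b hc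
  omega

lemma boxCount_rec (a b n : ℕ) :
    boxCount (a + 1) (b + 1) n =
      boxCount (a + 1) b n + (if b + 1 ≤ n then boxCount a (b + 1) (n - (b + 1)) else 0) := by
  classical
  unfold boxCount
  have hiff : ∀ π : n.Partition,
      (Multiset.card π.parts ≤ a + 1 ∧ π.parts.sup ≤ b + 1) ↔
      ((Multiset.card π.parts ≤ a + 1 ∧ π.parts.sup ≤ b) ∨
       (b + 1 ∈ π.parts ∧ Multiset.card π.parts ≤ a + 1 ∧ π.parts.sup ≤ b + 1)) := by
    intro π
    constructor
    · rintro ⟨hc, hs⟩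
      by_cases hm : b + 1 ∈ π.parts
      · exact Or.inr ⟨hm, hc, hs⟩
      · refine Or.inl ⟨hc, Multiset.sup_le.2 fun x hx => ?_⟩
        have h1 : x ≤ b + 1 := le_trans (Multiset.le_sup hx) hs
        have h2 : x ≠ b + 1 := fun h => hm (h ▸ hx)
        omega
    · rintro (⟨hc, hs⟩ | ⟨_, hc, hs⟩)
      · exact ⟨hc, le_trans hs (Nat.le_succ b)⟩
      · exact ⟨hc, hs⟩
  rw [Nat.card_congr (Equiv.subtypeEquivRight hiff), card_or]
  · congr 1
    by_cases hn : b + 1 ≤ n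
    · rw [if_pos hn]
      exact Nat.card_congr (eraseEquiv n (b + 1) a (Nat.succ_pos b) hn)
    · rw [if_neg hn]
      have := isEmpty_mem_part (N := n) (l := b + 1)
        (by omega) (fun π => Multiset.card π.parts ≤ a + 1 ∧ π.parts.sup ≤ b + 1)
      exact Nat.card_of_isEmpty
  · rintro π ⟨⟨-, hs⟩, hm, -, -⟩
    have := Multiset.le_sup hm
    omega

lemma rkCount_rec (m l n : ℕ) (h : m ≤ l) :
    rkCount m (l + 1) n =
      rkCount m l n + (if l + 1 ≤ n then boxCount (l - m) (l + 1) (n - (l + 1)) else 0) := by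
  classical
  unfold rkCount
  have hiff : ∀ π : n.Partition,
      ((m : ℤ) ≤ rank π ∧ π.parts.sup ≤ l + 1) ↔
      (((m : ℤ) ≤ rank π ∧ π.parts.sup ≤ l) ∨
       (l + 1 ∈ π.parts ∧ Multiset.card π.parts ≤ (l - m) + 1 ∧ π.parts.sup ≤ l + 1)) := by
    intro π
    unfold rank
    constructor
    · rintro ⟨hr, hs⟩
      by_cases hm : l + 1 ∈ π.parts
      · refine Or.inr ⟨hm, ?_, hs⟩
        have hsup : π.parts.sup = l + 1 := le_antisymm hs (Multiset.le_sup hm)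
        rw [hsup] at hr
        omega
      · refine Or.inl ⟨hr, Multiset.sup_le.2 fun x hx => ?_⟩
        have h1 : x ≤ l + 1 := le_trans (Multiset.le_sup hx) hs
        have h2 : x ≠ l + 1 := fun h => hm (h ▸ hx)
        omega
    · rintro (⟨hr, hs⟩ | ⟨hm, hc, hs⟩)
      · exact ⟨hr, le_trans hs (Nat.le_succ l)⟩
      · have hsup : π.parts.sup = l + 1 := le_antisymm hs (Multiset.le_sup hm)
        rw [hsup]
        constructor
        · omega
        · exact le_rfl
  rw [Nat.card_congr (Equiv.subtypeEquivRight hiff), card_or]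
  · congr 1
    by_cases hn : l + 1 ≤ n
    · rw [if_pos hn]
      exact Nat.card_congr (eraseEquiv n (l + 1) (l - m) (Nat.succ_pos l) hn)
    · rw [if_neg hn]
      have := isEmpty_mem_part (N := n) (l := l + 1)
        (by omega) (fun π => Multiset.card π.parts ≤ (l - m) + 1 ∧ π.parts.sup ≤ l + 1)
      exact Nat.card_of_isEmpty
  · rintro π ⟨⟨-, hs⟩, hm, -, -⟩
    have := Multiset.le_sup hm
    omega

lemma rkCount_zero {m l n : ℕ} (h : l ≤ m) (hn : 0 < n) : rkCount m l n = 0 := by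
  unfold rkCount
  rw [Nat.card_eq_zero]
  left
  constructor
  rintro ⟨π, hr, hs⟩
  unfold rank at hr
  have hne : π.parts ≠ 0 := by
    intro h0
    have := π.parts_sum
    rw [h0] at this
    simp at this
    omega
  have hcard : 0 < Multiset.card π.parts := Multiset.card_pos.2 hne
  have hsup : π.parts.sup ≤ l := hs
  omega

lemma rkCount_large {m l n : ℕ} (h : l * l < n) : rkCount m l n = 0 := by
  unfold rkCount
  rw [Nat.card_eq_zero]
  left
  constructor
  rintro ⟨π, hr, hs⟩
  unfold rank at hr
  have h1 : π.parts.sum ≤ Multiset.card π.parts • π.parts.sup :=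
    Multiset.sum_le_card_nsmul _ _ fun x hx => Multiset.le_sup hx
  rw [π.parts_sum, smul_eq_mul] at h1
  have hcle : Multiset.card π.parts ≤ l := by omega
  have : Multiset.card π.parts * π.parts.sup ≤ l * l := Nat.mul_le_mul hcle hs
  omega


noncomputable def boxGF (q : ℝ) (a b : ℕ) : ℝ := ∑' n : ℕ, (boxCount a b n : ℝ) * q ^ n

lemma summable_box (q : ℝ) (a b : ℕ) : Summable (fun n => (boxCount a b n : ℝ) * q ^ n) := by
  apply summable_of_ne_finset_zero (s := Finset.range (a * b + 1))
  intro n hn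
  rw [Finset.mem_range, not_lt] at hn
  rw [boxCount_large (by omega)]
  simp

lemma boxGF_rec (q : ℝ) (a b : ℕ) :
    boxGF q (a + 1) (b + 1) = boxGF q (a + 1) b + q ^ (b + 1) * boxGF q a (b + 1) := by
  unfold boxGF
  have e1 : ∀ n : ℕ, ((boxCount (a + 1) (b + 1) n : ℝ)) * q ^ n =
      (boxCount (a + 1) b n : ℝ) * q ^ n +
      (if b + 1 ≤ n then (boxCount a (b + 1) (n - (b + 1)) : ℝ) else 0) * q ^ n := by
    intro n
    rw [boxCount_rec a b n]
    push_cast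
    split <;> ring
  rw [tsum_congr e1]
  have S2 : Summable (fun n =>
      (if b + 1 ≤ n then (boxCount a (b + 1) (n - (b + 1)) : ℝ) else 0) * q ^ n) := by
    apply summable_of_ne_finset_zero (s := Finset.range ((a + 1) * (b + 1) + 1))
    intro n hn
    rw [Finset.mem_range, not_lt] at hn
    rcases le_or_gt (b + 1) n with h | h
    · have hx : (a + 1) * (b + 1) = a * (b + 1) + (b + 1) := by ring
      rw [if_pos h, boxCount_large (show a * (b+1) < n - (b+1) by omega)]
      simp
    · rw [if_neg (by omega)]
      ring
  rw [Summable.tsum_add (summable_box q (a + 1) b) S2]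
  congr 1
  rw [← Summable.sum_add_tsum_nat_add (b + 1) S2]
  have hzero : ∀ i ∈ Finset.range (b + 1),
      (if b + 1 ≤ i then (boxCount a (b + 1) (i - (b + 1)) : ℝ) else 0) * q ^ i = 0 := by
    intro i hi
    rw [Finset.mem_range] at hi
    rw [if_neg (by omega)]
    ring
  rw [Finset.sum_eq_zero hzero, zero_add]
  have e2 : ∀ n : ℕ, (if b + 1 ≤ n + (b + 1) then (boxCount a (b + 1) (n + (b + 1) - (b + 1)) : ℝ)
      else 0) * q ^ (n + (b + 1)) = q ^ (b + 1) * ((boxCount a (b + 1) n : ℝ) * q ^ n) := by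
    intro n
    rw [if_pos (by omega)]
    have : n + (b + 1) - (b + 1) = n := by omega
    rw [this, pow_add]
    ring
  rw [tsum_congr e2, tsum_mul_left]

lemma boxGF_right_zero (q : ℝ) (a : ℕ) : boxGF q a 0 = 1 := by
  unfold boxGF
  rw [tsum_eq_sum (s := {0}) (by
    intro n hn
    simp only [Finset.mem_singleton] at hn
    rw [boxCount_large (by omega)]
    simp)]
  simp [boxCount_zero]

lemma boxGF_left_zero (q : ℝ) (b : ℕ) : boxGF q 0 b = 1 := by
  unfold boxGF
  rw [tsum_eq_sum (s := {0}) (by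
    intro n hn
    simp only [Finset.mem_singleton] at hn
    rw [boxCount_large (by omega)]
    simp)]
  simp [boxCount_zero]

lemma boxGF_eq {q : ℝ} (hq : |q| < 1) (a b : ℕ) : boxGF q a b = qb q (a + b) b := by
  induction b generalizing a with
  | zero => rw [boxGF_right_zero, qb_zero_right hq]
  | succ b ihb =>
    induction a with
    | zero => rw [boxGF_left_zero]; rw [zero_add, qb_self hq]
    | succ a iha =>
      rw [boxGF_rec, ihb (a + 1), iha]
      have h : a + 1 + (b + 1) = (a + 1 + b) + 1 := by omega
      have h2 : a + (b + 1) = a + 1 + b := by omega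
      rw [h, h2, pascal1 hq (a + 1 + b) b]

lemma summable_rk (q : ℝ) (m l : ℕ) :
    Summable (fun n => (rkCount m l (n + 1) : ℝ) * q ^ (n + 1)) := by
  apply summable_of_ne_finset_zero (s := Finset.range (l * l))
  intro n hn
  rw [Finset.mem_range, not_lt] at hn
  rw [rkCount_large (by omega)]
  simp

lemma QL_coeff (q : ℝ) (m l : ℕ) :
    QL q m (l : ℤ) = ∑' n : ℕ, (rkCount m l (n + 1) : ℝ) * q ^ (n + 1) := by
  unfold QL rkCount
  apply tsum_congr
  intro n
  congr 2
  apply Nat.card_congr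
  apply Equiv.subtypeEquivRight
  intro π
  constructor
  · rintro ⟨h1, h2⟩; exact ⟨h1, by exact_mod_cast h2⟩
  · rintro ⟨h1, h2⟩; exact ⟨h1, by exact_mod_cast h2⟩

lemma QL_zero_nat (q : ℝ) {m l : ℕ} (h : l ≤ m) : QL q m (l : ℤ) = 0 := by
  rw [QL_coeff]
  have e : ∀ n : ℕ, (rkCount m l (n + 1) : ℝ) * q ^ (n + 1) = 0 := by
    intro n
    rw [rkCount_zero h (Nat.succ_pos n)]
    simp
  rw [tsum_congr e, tsum_zero]


lemma QL_rec (q : ℝ) (m l : ℕ) (h : m ≤ l) :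
    QL q m ((l + 1 : ℕ) : ℤ) = QL q m (l : ℤ) + q ^ (l + 1) * boxGF q (l - m) (l + 1) := by
  rw [QL_coeff, QL_coeff]
  have e1 : ∀ n : ℕ, (rkCount m (l + 1) (n + 1) : ℝ) * q ^ (n + 1) =
      (rkCount m l (n + 1) : ℝ) * q ^ (n + 1) +
      (if l + 1 ≤ n + 1 then (boxCount (l - m) (l + 1) (n + 1 - (l + 1)) : ℝ) else 0) *
        q ^ (n + 1) := by
    intro n
    rw [rkCount_rec m l (n + 1) h]
    push_cast
    split <;> ring
  have S2 : Summable (fun n : ℕ =>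
      (if l + 1 ≤ n + 1 then (boxCount (l - m) (l + 1) (n + 1 - (l + 1)) : ℝ) else 0) *
        q ^ (n + 1)) := by
    apply summable_of_ne_finset_zero (s := Finset.range ((l - m) * (l + 1) + l + 1))
    intro n hn
    rw [Finset.mem_range, not_lt] at hn
    rcases le_or_gt (l + 1) (n + 1) with h2 | h2
    · rw [if_pos h2, boxCount_large (show (l - m) * (l + 1) < n + 1 - (l + 1) by omega)]
      simp
    · rw [if_neg (by omega)]
      ring
  rw [tsum_congr e1, Summable.tsum_add (summable_rk q m l) S2]
  congr 1
  rw [← Summable.sum_add_tsum_nat_add l S2]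
  have hzero : ∀ i ∈ Finset.range l,
      (if l + 1 ≤ i + 1 then (boxCount (l - m) (l + 1) (i + 1 - (l + 1)) : ℝ) else 0) *
        q ^ (i + 1) = 0 := by
    intro i hi
    rw [Finset.mem_range] at hi
    rw [if_neg (by omega)]
    ring
  rw [Finset.sum_eq_zero hzero, zero_add]
  have e2 : ∀ n : ℕ,
      (if l + 1 ≤ n + l + 1 then (boxCount (l - m) (l + 1) (n + l + 1 - (l + 1)) : ℝ) else 0) *
        q ^ (n + l + 1) = q ^ (l + 1) * ((boxCount (l - m) (l + 1) n : ℝ) * q ^ n) := by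
    intro n
    rw [if_pos (by omega)]
    have hx : n + l + 1 - (l + 1) = n := by omega
    rw [hx, show n + l + 1 = n + (l + 1) by omega, pow_add]
    ring
  unfold boxGF
  rw [tsum_congr e2, tsum_mul_left]

lemma QL_sum {q : ℝ} (hq : |q| < 1) (m l : ℕ) :
    QL q m (l : ℤ) = ∑ i ∈ Finset.Icc (m + 1) l, q ^ i * qb q (2 * i - m - 1) i := by
  induction l with
  | zero =>
    rw [QL_zero_nat q (Nat.zero_le m), Finset.Icc_eq_empty (by omega), Finset.sum_empty]
  | succ l ih =>
    rcases le_or_gt (l + 1) m with h1 | h1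
    · rw [QL_zero_nat q h1, Finset.Icc_eq_empty (by omega), Finset.sum_empty]
    · have h : m ≤ l := by omega
      rw [QL_rec q m l h, ih, boxGF_eq hq, Finset.sum_Icc_succ_top (by omega)]
      have hx : l - m + (l + 1) = 2 * (l + 1) - m - 1 := by omega
      rw [hx]


/-- exponent in the alternating sum -/
def Ee (m j : ℕ) : ℕ := (j + 1) * (3 * (j + 1) - 1) / 2 + m * (j + 1)
/-- `⌊3k/2⌋` -/
def cc (k : ℕ) : ℕ := 3 * k / 2
/-- `⌊(3k-1)/2⌋` -/
def dd (k : ℕ) : ℕ := (3 * k - 1) / 2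

noncomputable def tt (q : ℝ) (m l j : ℕ) : ℝ :=
  (-1 : ℝ) ^ j * q ^ Ee m j * qb q (2 * l - m) (l + cc (j + 1))

noncomputable def vv (q : ℝ) (m l j : ℕ) : ℝ :=
  (-1 : ℝ) ^ j * q ^ Ee m j * qb q (2 * l - m - 1) (l + dd (j + 1))

lemma cc_odd (r : ℕ) : cc (2 * r + 1) = 3 * r + 1 := by unfold cc; omega
lemma cc_even (r : ℕ) : cc (2 * r + 2) = 3 * r + 3 := by unfold cc; omega
lemma dd_odd (r : ℕ) : dd (2 * r + 1) = 3 * r + 1 := by unfold dd; omega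
lemma dd_even (r : ℕ) : dd (2 * r + 2) = 3 * r + 2 := by unfold dd; omega
lemma cc_ge (k : ℕ) : k ≤ cc k := by unfold cc; omega
lemma dd_ge (k : ℕ) (h : 1 ≤ k) : k ≤ dd k := by unfold dd; omega

lemma Ee_even (m r : ℕ) : Ee m (2 * r) = (2 * r + 1) * (3 * r + 1) + m * (2 * r + 1) := by
  unfold Ee
  have h0 : 2 * r + 1 = 2 * r + 1 := rfl
  have h1 : (2 * r + 1) * (3 * (2 * r + 1) - 1) = 2 * ((2 * r + 1) * (3 * r + 1)) := by
    have h2 : 3 * (2 * r + 1) - 1 = 6 * r + 2 := by omega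
    rw [h2]; ring
  rw [show (2 * r : ℕ) + 1 = 2 * r + 1 from rfl, h1,
    Nat.mul_div_cancel_left _ (by norm_num : (0:ℕ) < 2)]

lemma Ee_odd (m r : ℕ) : Ee m (2 * r + 1) = (r + 1) * (6 * r + 5) + m * (2 * r + 2) := by
  unfold Ee
  have h1 : (2 * r + 1 + 1) * (3 * (2 * r + 1 + 1) - 1) = 2 * ((r + 1) * (6 * r + 5)) := by
    have h2 : 3 * (2 * r + 1 + 1) - 1 = 6 * r + 5 := by omega
    rw [h2]; ring
  rw [h1, Nat.mul_div_cancel_left _ (by norm_num : (0:ℕ) < 2)]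

lemma neg_one_pow_odd (r : ℕ) : ((-1 : ℝ)) ^ (2 * r + 1) = -1 := by
  simp [pow_succ, pow_mul]

lemma neg_one_pow_even (r : ℕ) : ((-1 : ℝ)) ^ (2 * r + 2) = 1 := by
  simp [pow_succ, pow_mul]

lemma neg_one_pow_even' (r : ℕ) : ((-1 : ℝ)) ^ (2 * r) = 1 := by
  simp [pow_mul]


lemma left0 {q : ℝ} (hq : |q| < 1) (m l : ℕ) (h : m + 1 ≤ l) :
    tt q m l 0 - vv q m l 0 = q ^ l * qb q (2 * l - m - 1) l := by
  have hE : Ee m 0 = m + 1 := by unfold Ee; omega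
  have hc : cc 1 = 1 := by unfold cc; omega
  have hd : dd 1 = 1 := by unfold dd; omega
  unfold tt vv
  rw [show (0:ℕ) + 1 = 1 from rfl, hE, hc, hd]
  have hp := pascal2 hq (2 * l - m - 1) l
  rw [show 2 * l - m - 1 + 1 = 2 * l - m by omega,
    show 2 * l - m - 1 - l = l - m - 1 by omega] at hp
  rw [hp, pow_zero]
  have hpow : q ^ (m + 1) * q ^ (l - m - 1) = q ^ l := by
    rw [← pow_add]; congr 1; omega
  linear_combination (qb q (2 * l - m - 1) l) * hpow

lemma expand1 {q : ℝ} (hq : |q| < 1) (m l r : ℕ) (h : m + 1 ≤ l) :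
    tt q m l (2 * r + 1) - vv q m l (2 * r + 1) =
      -(q ^ (Ee m (2 * r + 1) + (l + 3 * r + 3)) * qb q (2 * l - m - 1) (l + 3 * r + 3)) := by
  unfold tt vv
  rw [show 2 * r + 1 + 1 = 2 * r + 2 from rfl, cc_even r, dd_even r]
  have hp := pascal1 hq (2 * l - m - 1) (l + 3 * r + 2)
  rw [show 2 * l - m - 1 + 1 = 2 * l - m by omega,
    show l + 3 * r + 2 + 1 = l + 3 * r + 3 by omega] at hp
  rw [neg_one_pow_odd r, show l + (3 * r + 3) = l + 3 * r + 3 by omega,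
    show l + (3 * r + 2) = l + 3 * r + 2 by omega, hp, pow_add]
  ring

lemma expand2 {q : ℝ} (hq : |q| < 1) (m l r : ℕ) (h : m + 1 ≤ l) :
    tt q m l (2 * r + 2) - vv q m l (2 * r + 2) =
      q ^ (Ee m (2 * r + 2) + (2 * l - m - 1 - (l + 3 * r + 3))) *
        qb q (2 * l - m - 1) (l + 3 * r + 3) := by
  unfold tt vv
  rw [show 2 * r + 2 + 1 = 2 * (r + 1) + 1 by ring, cc_odd (r + 1), dd_odd (r + 1)]
  have hp := pascal2 hq (2 * l - m - 1) (l + 3 * r + 3)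
  rw [show 2 * l - m - 1 + 1 = 2 * l - m by omega,
    show l + 3 * r + 3 + 1 = l + 3 * r + 4 by omega] at hp
  rw [neg_one_pow_even r, show l + (3 * (r + 1) + 1) = l + 3 * r + 4 by omega, hp, pow_add]
  ring

lemma left_pair {q : ℝ} (hq : |q| < 1) (m l r : ℕ) (h : m + 1 ≤ l) :
    (tt q m l (2 * r + 1) - vv q m l (2 * r + 1)) +
      (tt q m l (2 * r + 2) - vv q m l (2 * r + 2)) = 0 := by
  rw [expand1 hq m l r h, expand2 hq m l r h]
  rcases le_or_gt (m + 3 * r + 4) l with hc | hc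
  · have hE : Ee m (2 * r + 2) = Ee m (2 * r + 1) + (6 * r + 7 + m) := by
      rw [show 2 * r + 2 = 2 * (r + 1) by ring, Ee_even, Ee_odd]; ring
    have hexp : Ee m (2 * r + 2) + (2 * l - m - 1 - (l + 3 * r + 3)) =
        Ee m (2 * r + 1) + (l + 3 * r + 3) := by
      rw [hE]; omega
    rw [hexp]; ring
  · rw [qb_eq_zero (show 2 * l - m - 1 < l + 3 * r + 3 by omega)]; ring

lemma expand3 {q : ℝ} (hq : |q| < 1) (m l r : ℕ) (h : m ≤ l) :
    vv q m (l + 1) (2 * r) - tt q m l (2 * r) =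
      q ^ (Ee m (2 * r) + (l + 3 * r + 2)) * qb q (2 * l - m) (l + 3 * r + 2) := by
  unfold tt vv
  rw [show 2 * r + 1 = 2 * r + 1 from rfl, cc_odd r, dd_odd r]
  have hp := pascal1 hq (2 * l - m) (l + 3 * r + 1)
  rw [show l + 3 * r + 1 + 1 = l + 3 * r + 2 by omega] at hp
  rw [neg_one_pow_even' r,
    show 2 * (l + 1) - m - 1 = 2 * l - m + 1 by omega,
    show l + 1 + (3 * r + 1) = l + 3 * r + 2 by omega,
    show l + (3 * r + 1) = l + 3 * r + 1 by omega, hp, pow_add]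
  ring

lemma expand4 {q : ℝ} (hq : |q| < 1) (m l r : ℕ) (h : m ≤ l) :
    vv q m (l + 1) (2 * r + 1) - tt q m l (2 * r + 1) =
      -(q ^ (Ee m (2 * r + 1) + (2 * l - m - (l + 3 * r + 2))) *
        qb q (2 * l - m) (l + 3 * r + 2)) := by
  unfold tt vv
  rw [show 2 * r + 1 + 1 = 2 * r + 2 from rfl, cc_even r, dd_even r]
  have hp := pascal2 hq (2 * l - m) (l + 3 * r + 2)
  rw [show l + 3 * r + 2 + 1 = l + 3 * r + 3 by omega] at hp
  rw [neg_one_pow_odd r,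
    show 2 * (l + 1) - m - 1 = 2 * l - m + 1 by omega,
    show l + 1 + (3 * r + 2) = l + 3 * r + 3 by omega,
    show l + (3 * r + 3) = l + 3 * r + 3 by omega, hp, pow_add]
  ring

lemma pair2 {q : ℝ} (hq : |q| < 1) (m l r : ℕ) (h : m ≤ l) :
    (vv q m (l + 1) (2 * r) - tt q m l (2 * r)) +
      (vv q m (l + 1) (2 * r + 1) - tt q m l (2 * r + 1)) = 0 := by
  rw [expand3 hq m l r h, expand4 hq m l r h]
  rcases le_or_gt (m + 3 * r + 2) l with hc | hc
  · have hE : Ee m (2 * r + 1) = Ee m (2 * r) + (6 * r + 4 + m) := by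
      rw [Ee_even, Ee_odd]; ring
    have hexp : Ee m (2 * r + 1) + (2 * l - m - (l + 3 * r + 2)) =
        Ee m (2 * r) + (l + 3 * r + 2) := by
      rw [hE]; omega
    rw [hexp]; ring
  · rw [qb_eq_zero (show 2 * l - m < l + 3 * r + 2 by omega)]; ring


lemma tt_vanish (q : ℝ) (m l : ℕ) {j : ℕ} (hj : l ≤ j) : tt q m l j = 0 := by
  have hc := cc_ge (j + 1)
  unfold tt
  rw [qb_eq_zero (show 2 * l - m < l + cc (j + 1) by omega)]
  ring

lemma vv_vanish (q : ℝ) (m l : ℕ) {j : ℕ} (hj : l ≤ j) : vv q m l j = 0 := by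
  have hd := dd_ge (j + 1) (by omega)
  unfold vv
  rw [qb_eq_zero (show 2 * l - m - 1 < l + dd (j + 1) by omega)]
  ring

lemma tt_all_vanish (q : ℝ) (m l j : ℕ) (h : l ≤ m) : tt q m l j = 0 := by
  have hc := cc_ge (j + 1)
  unfold tt
  rw [qb_eq_zero (show 2 * l - m < l + cc (j + 1) by omega)]
  ring

lemma sum_range_odd (f : ℕ → ℝ) (K : ℕ) :
    ∑ j ∈ Finset.range (2 * K + 1), f j =
      f 0 + ∑ r ∈ Finset.range K, (f (2 * r + 1) + f (2 * r + 2)) := by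
  induction K with
  | zero => simp
  | succ K ih =>
    rw [show 2 * (K + 1) + 1 = (2 * K + 1) + 1 + 1 by ring, Finset.sum_range_succ,
      Finset.sum_range_succ, ih, Finset.sum_range_succ,
      show 2 * K + 1 + 1 = 2 * K + 2 by ring]
    ring

lemma sum_range_even (f : ℕ → ℝ) (K : ℕ) :
    ∑ j ∈ Finset.range (2 * K), f j =
      ∑ r ∈ Finset.range K, (f (2 * r) + f (2 * r + 1)) := by
  induction K with
  | zero => simp
  | succ K ih =>
    rw [show 2 * (K + 1) = (2 * K) + 1 + 1 by ring, Finset.sum_range_succ,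
      Finset.sum_range_succ, ih, Finset.sum_range_succ,
      show 2 * K + 1 = 2 * K + 1 by ring]
    ring

lemma stage1 {q : ℝ} (hq : |q| < 1) (m l : ℕ) (h : m + 1 ≤ l) :
    (∑' j : ℕ, tt q m l j) = q ^ l * qb q (2 * l - m - 1) l + ∑' j : ℕ, vv q m l j := by
  rw [tsum_eq_sum (s := Finset.range (2 * l + 1))
      (fun j hj => tt_vanish q m l (by rw [Finset.mem_range] at hj; omega)),
    tsum_eq_sum (s := Finset.range (2 * l + 1))
      (fun j hj => vv_vanish q m l (by rw [Finset.mem_range] at hj; omega))]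
  have key : ∑ j ∈ Finset.range (2 * l + 1), (tt q m l j - vv q m l j) =
      q ^ l * qb q (2 * l - m - 1) l := by
    rw [sum_range_odd (fun j => tt q m l j - vv q m l j) l, left0 hq m l h,
      Finset.sum_eq_zero (fun r _ => left_pair hq m l r h)]
    ring
  rw [Finset.sum_sub_distrib] at key
  linarith

lemma stage2 {q : ℝ} (hq : |q| < 1) (m l : ℕ) (h : m ≤ l) :
    (∑' j : ℕ, vv q m (l + 1) j) = ∑' j : ℕ, tt q m l j := by
  rw [tsum_eq_sum (s := Finset.range (2 * (l + 1)))
      (fun j hj => vv_vanish q m (l + 1) (by rw [Finset.mem_range] at hj; omega)),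
    tsum_eq_sum (s := Finset.range (2 * (l + 1)))
      (fun j hj => tt_vanish q m l (by rw [Finset.mem_range] at hj; omega))]
  have key : ∑ j ∈ Finset.range (2 * (l + 1)), (vv q m (l + 1) j - tt q m l j) = 0 := by
    rw [sum_range_even (fun j => vv q m (l + 1) j - tt q m l j) (l + 1)]
    exact Finset.sum_eq_zero fun r _ => pair2 hq m l r h
  rw [Finset.sum_sub_distrib] at key
  linarith

lemma sum_eq_T {q : ℝ} (hq : |q| < 1) (m l : ℕ) :
    ∑ i ∈ Finset.Icc (m + 1) l, q ^ i * qb q (2 * i - m - 1) i = ∑' j : ℕ, tt q m l j := by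
  induction l with
  | zero =>
    rw [Finset.Icc_eq_empty (by omega), Finset.sum_empty,
      tsum_congr (fun j => tt_all_vanish q m 0 j (Nat.zero_le m)), tsum_zero]
  | succ l ih =>
    rcases le_or_gt (l + 1) m with h1 | h1
    · rw [Finset.Icc_eq_empty (by omega), Finset.sum_empty,
        tsum_congr (fun j => tt_all_vanish q m (l + 1) j h1), tsum_zero]
    · have h : m ≤ l := by omega
      rw [Finset.sum_Icc_succ_top (by omega), ih, ← stage2 hq m l h,
        stage1 hq m (l + 1) (by omega)]
      ring


lemma qbinom_nat (q : ℝ) (a b : ℕ) : qbinom q (a : ℤ) (b : ℤ) = qb q a b := by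
  unfold qbinom qb
  rcases le_or_gt b a with h | h
  · rw [if_pos ⟨Int.ofNat_nonneg b, by exact_mod_cast h⟩, if_pos h]
    have h1 : ((a : ℤ)).toNat = a := Int.toNat_natCast a
    have h2 : ((b : ℤ)).toNat = b := Int.toNat_natCast b
    have h3 : ((a : ℤ) - (b : ℤ)).toNat = a - b := by omega
    rw [h1, h2, h3]
  · rw [if_neg (by push_neg; intro _; exact_mod_cast h), if_neg (by omega)]

lemma QL_nonpos (q : ℝ) (m : ℕ) (L : ℤ) (h : L ≤ (m : ℤ)) : QL q m L = 0 := by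
  unfold QL
  have e : ∀ n : ℕ,
      (Nat.card {π : (n + 1).Partition // (m : ℤ) ≤ rank π ∧ (π.parts.sup : ℤ) ≤ L} : ℝ) *
        q ^ (n + 1) = 0 := by
    intro n
    have hE : IsEmpty {π : (n + 1).Partition // (m : ℤ) ≤ rank π ∧ (π.parts.sup : ℤ) ≤ L} := by
      constructor
      rintro ⟨π, hr, hs⟩
      unfold rank at hr
      have hne : π.parts ≠ 0 := by
        intro h0
        have hsum := π.parts_sum
        rw [h0] at hsum
        simp at hsum
      have hcard : 0 < Multiset.card π.parts := Multiset.card_pos.2 hne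
      omega
    rw [Nat.card_of_isEmpty]
    simp
  rw [tsum_congr e, tsum_zero]

/-- for m ≥ 0,
`Q_m^L(q) = Σ_{j≥1} (-1)^{j-1} q^{j(3j-1)/2 + mj} qbinom(2L-m, L+⌊3j/2⌋)`. -/
theorem stmt13 (q : ℝ) (hq : |q| < 1) (m : ℕ) (L : ℤ) :
    QL q m L = ∑' j : ℕ,
      (-1 : ℝ) ^ j * q ^ ((j + 1) * (3 * (j + 1) - 1) / 2 + m * (j + 1)) *
        qbinom q (2 * L - m) (L + (3 * (j + 1) : ℤ).fdiv 2) := by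
  have hfdiv : ∀ j : ℕ, ((3 * (j + 1) : ℤ)).fdiv 2 = ((cc (j + 1) : ℕ) : ℤ) := by
    intro j
    rw [Int.fdiv_eq_ediv_of_nonneg _ (by norm_num)]
    unfold cc
    omega
  rcases le_or_gt L (m : ℤ) with hL | hL
  · rw [QL_nonpos q m L hL]
    symm
    have e : ∀ j : ℕ,
        (-1 : ℝ) ^ j * q ^ ((j + 1) * (3 * (j + 1) - 1) / 2 + m * (j + 1)) *
          qbinom q (2 * L - m) (L + (3 * (j + 1) : ℤ).fdiv 2) = 0 := by
      intro j
      rw [hfdiv j]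
      have hcc : 1 ≤ cc (j + 1) := by unfold cc; omega
      rw [qbinom, if_neg (by push_neg; intro _; omega)]
      ring
    rw [tsum_congr e, tsum_zero]
  · obtain ⟨l, rfl⟩ : ∃ l : ℕ, L = (l : ℤ) :=
      ⟨L.toNat, (Int.toNat_of_nonneg (by omega)).symm⟩
    rw [QL_sum hq m l, sum_eq_T hq m l]
    apply tsum_congr
    intro j
    unfold tt Ee
    rw [hfdiv j]
    have h1 : (2 * (l : ℤ) - m) = ((2 * l - m : ℕ) : ℤ) := by omega
    have h2 : ((l : ℤ) + ((cc (j + 1) : ℕ) : ℤ)) = ((l + cc (j + 1) : ℕ) : ℤ) := by omega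
    rw [h1, h2, qbinom_nat]

end Dyson
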